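/- arXiv:2203.04653 — 5 statements merged into one kernel-verified Lean document; each statement's English description precedes it below -/
import Mathlib

section
/- Let φ : ℝ² → ℂ be a Schwartz function and let ψ : ℝ² → ℂ be essentially bounded and measurable, and suppose that ∫_{ℝ²} g(x)·ψ(x) dx = ∫_{ℝ²} g(x)·φ(x) dx for every Schwartz function g with 𝓕g compactly supported in the open ball of radius 2 centered at the origin. Then for all Schwartz functions f, g whose Fourier transforms have compact support contained in 𝔻, one has |B_φ(f,g)| ≤ ‖ψ‖_{L∞} · ‖f‖_{L²} · ‖g‖_{L²}; in particular N(φ) ≤ ‖ψ‖_{L∞}. -/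
open MeasureTheory SchwartzMap Metric
open scoped FourierTransform Real ENNReal

noncomputable section

abbrev E2 : Type := EuclideanSpace ℝ (Fin 2)

/-- The open unit disc in `ℝ²`. -/
def disc : Set E2 := Metric.ball 0 1

/-- The Hankel form `B_φ(f,g) = ∫_𝔻 ∫_𝔻 𝓕f(ξ) 𝓕φ(ξ+η) conj(𝓕g(η)) dξ dη`. -/
def hankelForm (φ f g : 𝓢(E2, ℂ)) : ℂ :=
  ∫ η in disc, ∫ ξ in disc, 𝓕 ⇑f ξ * 𝓕 ⇑φ (ξ + η) * (starRingEnd ℂ) (𝓕 ⇑g η)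

/-- `𝓕f` has compact support contained in the open unit disc. -/
def PWcond (f : 𝓢(E2, ℂ)) : Prop :=
  HasCompactSupport (𝓕 ⇑f) ∧ tsupport (𝓕 ⇑f) ⊆ disc

/-- The Hankel (operator) norm `N(φ)`. -/
def hankelNorm (φ : 𝓢(E2, ℂ)) : ℝ :=
  sSup {x : ℝ | ∃ f g : 𝓢(E2, ℂ), PWcond f ∧ PWcond g ∧
    eLpNorm ⇑f 2 volume ≤ 1 ∧ eLpNorm ⇑g 2 volume ≤ 1 ∧ x = ‖hankelForm φ f g‖}

/-- `D_φ = {η ∈ 𝔻 : ∃ ξ ∈ 𝔻, ξ + η ∈ supp 𝓕φ}`. -/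
def Dset (φ : 𝓢(E2, ℂ)) : Set E2 :=
  {η | η ∈ disc ∧ ∃ ξ ∈ disc, ξ + η ∈ tsupport (𝓕 ⇑φ)}


section HankelAux

open scoped RealInnerProductSpace

lemma schwartz_tempGrowth (f : 𝓢(E2, ℂ)) : Function.HasTemperateGrowth ⇑f := by
  refine ⟨f.smooth ⊤, fun n => ?_⟩
  obtain ⟨C, hC⟩ := f.decay 0 n
  exact ⟨0, C, fun x => by simpa using hC.2 x⟩

def conjS (g : 𝓢(E2, ℂ)) : 𝓢(E2, ℂ) where
  toFun := fun x => (starRingEnd ℂ) (g x)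
  smooth' := Complex.conjCLE.contDiff.comp (g.smooth ⊤)
  decay' := by
    intro k n
    obtain ⟨C, hC⟩ := g.decay k n
    refine ⟨C, fun x => ?_⟩
    have h : (fun x => (starRingEnd ℂ) (g x)) = ⇑Complex.conjLIE ∘ ⇑g := rfl
    rw [h, LinearIsometryEquiv.norm_iteratedFDeriv_comp_left]
    exact hC.2 x

@[simp] lemma conjS_apply (g : 𝓢(E2, ℂ)) (x : E2) : conjS g x = (starRingEnd ℂ) (g x) := rfl

def negS (f : 𝓢(E2, ℂ)) : 𝓢(E2, ℂ) :=
  compCLMOfContinuousLinearEquiv ℝ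
    (LinearIsometryEquiv.neg ℝ (E := E2)).toContinuousLinearEquiv f

@[simp] lemma negS_apply (f : 𝓢(E2, ℂ)) (x : E2) : negS f x = f (-x) := rfl

def mulS (f g : 𝓢(E2, ℂ)) : 𝓢(E2, ℂ) :=
  bilinLeftCLM (ContinuousLinearMap.mul ℝ ℂ) (schwartz_tempGrowth g) f

@[simp] lemma mulS_apply (f g : 𝓢(E2, ℂ)) (x : E2) : mulS f g x = f x * g x := rfl

lemma flip_mul {u v : E2 → ℂ} (hu : Integrable u volume) (hv : Integrable v volume) :
    ∫ ξ, 𝓕 u ξ * v ξ = ∫ x, u x * 𝓕 v x := by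
  have h := VectorFourier.integral_fourierIntegral_smul_eq_flip
    (L := innerₗ E2) Real.continuous_fourierChar continuous_inner hu hv
  rw [flip_innerₗ] at h
  exact h

lemma int_fourier (f : 𝓢(E2, ℂ)) : Integrable (𝓕 ⇑f) volume := by
  have h := (fourierTransformCLM ℂ f).integrable (μ := volume)
  rwa [SchwartzMap.fourierTransformCLM_apply] at h

lemma fourier_fourier (f : 𝓢(E2, ℂ)) (x : E2) : 𝓕 (𝓕 ⇑f) x = f (-x) := by
  have h1 : 𝓕 (𝓕 ⇑f) x = 𝓕⁻ (𝓕 ⇑f) (-x) := by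
    rw [Real.fourierInv_eq_fourier_neg, neg_neg]
  rw [h1, Continuous.fourierInv_fourier_eq f.continuous f.integrable (int_fourier f)]

lemma fourier_conj (u : E2 → ℂ) (w : E2) :
    𝓕 (fun x => (starRingEnd ℂ) (u x)) w = (starRingEnd ℂ) (𝓕 u (-w)) := by
  rw [Real.fourier_eq', Real.fourier_eq', ← integral_conj]
  refine integral_congr_ae (Filter.Eventually.of_forall fun v => ?_)
  simp only [smul_eq_mul, map_mul, ← Complex.exp_conj, map_mul, Complex.conj_ofReal,
    Complex.conj_I, inner_neg_right]
  push_cast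
  ring_nf

lemma fourier_conj_fourier (g : 𝓢(E2, ℂ)) (x : E2) :
    𝓕 (fun η => (starRingEnd ℂ) (𝓕 ⇑g η)) x = (starRingEnd ℂ) (g x) := by
  rw [fourier_conj, fourier_fourier, neg_neg]

lemma fourier_shift (u : E2 → ℂ) (η : E2) (x : E2) :
    𝓕 (fun ξ => u (ξ + η)) x = 𝐞 ⟪η, x⟫ • 𝓕 u x := by
  have h := VectorFourier.fourierIntegral_comp_add_right 𝐞 (volume : Measure E2)
    (innerₗ E2) u η
  exact congrFun h x

lemma int_conj_fourier (g : 𝓢(E2, ℂ)) :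
    Integrable (fun η => (starRingEnd ℂ) (𝓕 ⇑g η)) volume := by
  exact (Complex.conjLIE.integrable_comp_iff).2 (int_fourier g)

lemma int_comp_neg (f : 𝓢(E2, ℂ)) : Integrable (fun x => f (-x)) volume :=
  (negS f).integrable

lemma key (φ f g : 𝓢(E2, ℂ)) (hf : PWcond f) (hg : PWcond g) :
    hankelForm φ f g = ∫ x, (f (-x) * (starRingEnd ℂ) (g x)) * φ x := by
  have hFf0 : ∀ ξ, ξ ∉ disc → 𝓕 ⇑f ξ = 0 := fun ξ hξ =>
    image_eq_zero_of_notMem_tsupport (fun h => hξ (hf.2 h))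
  have hFg0 : ∀ η, η ∉ disc → 𝓕 ⇑g η = 0 := fun η hη =>
    image_eq_zero_of_notMem_tsupport (fun h => hη (hg.2 h))
  -- the Schwartz function w₀ x = f (-x) * φ x
  set w₀ : 𝓢(E2, ℂ) := mulS (negS f) φ with hw₀
  have step1 : hankelForm φ f g
      = ∫ η, 𝓕 ⇑w₀ η * (starRingEnd ℂ) (𝓕 ⇑g η) := by
    rw [hankelForm]
    rw [setIntegral_eq_integral_of_forall_compl_eq_zero
      (fun η hη => by simp [hFg0 η hη])]
    refine integral_congr_ae (Filter.Eventually.of_forall fun η => ?_)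
    dsimp only
    rw [setIntegral_eq_integral_of_forall_compl_eq_zero
      (fun ξ hξ => by rw [hFf0 ξ hξ, zero_mul, zero_mul])]
    -- inner integral: pull out the constant
    rw [integral_mul_const]
    congr 1
    -- ∫ ξ, 𝓕 f ξ * 𝓕 φ (ξ + η) = 𝓕 w₀ η
    have hint : Integrable (fun ξ => 𝓕 ⇑φ (ξ + η)) volume := by
      have := ((measurePreserving_add_right (volume : Measure E2) η).integrable_comp
        (int_fourier φ).aestronglyMeasurable).2 (int_fourier φ)
      exact this
    rw [flip_mul f.integrable hint]
    have hFshift : ∀ x, 𝓕 (fun ξ => 𝓕 ⇑φ (ξ + η)) x = 𝐞 ⟪η, x⟫ • φ (-x) := by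
      intro x
      rw [fourier_shift (𝓕 ⇑φ) η x, fourier_fourier]
    -- now compute 𝓕 w₀ η
    rw [Real.fourier_eq]
    rw [← MeasureTheory.integral_neg_eq_self
      (fun x => 𝐞 (-⟪x, η⟫) • (w₀ x : ℂ)) volume]
    refine integral_congr_ae (Filter.Eventually.of_forall fun x => ?_)
    dsimp only
    rw [hFshift x]
    simp only [hw₀, mulS_apply, negS_apply, neg_neg, inner_neg_left, neg_neg,
      Circle.smul_def, smul_eq_mul]
    rw [real_inner_comm x η]
    ring
  rw [step1, flip_mul w₀.integrable (int_conj_fourier g)]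
  refine integral_congr_ae (Filter.Eventually.of_forall fun x => ?_)
  dsimp only
  rw [fourier_conj_fourier]
  simp only [hw₀, mulS_apply, negS_apply]
  ring

lemma Fh_eq (f g : 𝓢(E2, ℂ)) (ζ : E2) :
    𝓕 ⇑(mulS (negS f) (conjS g)) ζ
      = ∫ ξ, 𝓕 ⇑f (-(ξ + ζ)) * (starRingEnd ℂ) (𝓕 ⇑g ξ) := by
  have hL : Continuous fun p : E2 × E2 => innerₗ E2 p.1 p.2 := continuous_inner
  have ha : Integrable (fun x => (𝐞 (-⟪x, ζ⟫) : ℂ) * f (-x)) volume := by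
    have := (VectorFourier.fourierIntegral_convergent_iff (f := fun x => f (-x))
      (μ := volume) Real.continuous_fourierChar hL ζ).2 (int_comp_neg f)
    simpa [Circle.smul_def] using this
  have hstep : 𝓕 ⇑(mulS (negS f) (conjS g)) ζ
      = ∫ x, (fun x => (𝐞 (-⟪x, ζ⟫) : ℂ) * f (-x)) x
          * 𝓕 (fun η => (starRingEnd ℂ) (𝓕 ⇑g η)) x := by
    rw [Real.fourier_eq]
    refine integral_congr_ae (Filter.Eventually.of_forall fun x => ?_)
    dsimp only
    rw [fourier_conj_fourier]
    simp only [mulS_apply, negS_apply, conjS_apply, Circle.smul_def, smul_eq_mul]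
    ring
  rw [hstep, ← flip_mul ha (int_conj_fourier g)]
  refine integral_congr_ae (Filter.Eventually.of_forall fun ξ => ?_)
  dsimp only
  congr 1
  -- 𝓕 (fun x => 𝐞 (-⟪x, ζ⟫) * f (-x)) ξ = 𝓕 f (-(ξ + ζ))
  have h1 : 𝓕 (fun x => (𝐞 (-⟪x, ζ⟫) : ℂ) * f (-x)) ξ
      = ∫ x, (𝐞 (-⟪x, ξ + ζ⟫) : ℂ) * f (-x) := by
    rw [Real.fourier_eq]
    refine integral_congr_ae (Filter.Eventually.of_forall fun x => ?_)
    dsimp only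
    rw [Circle.smul_def, smul_eq_mul, ← mul_assoc, ← Circle.coe_mul, ← AddChar.map_add_eq_mul]
    congr 2
    rw [inner_add_right, neg_add]
  rw [h1]
  have h2 : 𝓕 (fun x => f (-x)) (ξ + ζ) = ∫ x, (𝐞 (-⟪x, ξ + ζ⟫) : ℂ) * f (-x) := by
    rw [Real.fourier_eq]
    simp_rw [Circle.smul_def, smul_eq_mul]
  rw [← h2, ← Real.fourierInv_eq_fourier_comp_neg,
    Real.fourierInv_eq_fourier_neg]

lemma schwartz_memLp2 (f : 𝓢(E2, ℂ)) : MemLp ⇑f 2 volume := by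
  refine (memLp_two_iff_integrable_sq_norm f.continuous.aestronglyMeasurable).2 ?_
  have hi : Integrable (fun x => ‖(mulS f f) x‖) volume := (mulS f f).integrable.norm
  refine hi.mono' ((f.continuous.norm.pow 2).aestronglyMeasurable)
    (Filter.Eventually.of_forall fun x => ?_)
  simp only [mulS_apply, norm_mul, Real.norm_eq_abs, sq_abs, sq]
  rw [abs_of_nonneg (by positivity)]

lemma h_support (f g : 𝓢(E2, ℂ)) (hf : PWcond f) (hg : PWcond g) :
    HasCompactSupport (𝓕 ⇑(mulS (negS f) (conjS g))) ∧
      tsupport (𝓕 ⇑(mulS (negS f) (conjS g))) ⊆ Metric.ball 0 2 := by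
  set K : Set E2 :=
    (fun p : E2 × E2 => -p.1 - p.2) '' (tsupport (𝓕 ⇑f) ×ˢ tsupport (𝓕 ⇑g)) with hK
  have hKc : IsCompact K :=
    (hf.1.isCompact.prod hg.1.isCompact).image (by fun_prop)
  have hsupp : Function.support (𝓕 ⇑(mulS (negS f) (conjS g))) ⊆ K := by
    intro ζ hζ
    rw [Function.mem_support] at hζ
    have hex : ¬ ∀ ξ : E2, 𝓕 ⇑f (-(ξ + ζ)) * (starRingEnd ℂ) (𝓕 ⇑g ξ) = 0 := by
      intro hall
      refine hζ ?_
      rw [Fh_eq]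
      simp only [hall, integral_zero]
    push_neg at hex
    obtain ⟨ξ, hne⟩ := hex
    have h1 : -(ξ + ζ) ∈ tsupport (𝓕 ⇑f) :=
      subset_tsupport _ (left_ne_zero_of_mul hne)
    have h2 : ξ ∈ tsupport (𝓕 ⇑g) := by
      apply subset_tsupport
      intro h0
      exact right_ne_zero_of_mul hne (by rw [h0, map_zero])
    refine ⟨(-(ξ + ζ), ξ), Set.mk_mem_prod h1 h2, ?_⟩
    simp only [neg_neg]
    abel
  have hKb : K ⊆ Metric.ball (0 : E2) 2 := by
    rintro x ⟨⟨a, b⟩, ⟨haA, hbB⟩, rfl⟩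
    have ha : ‖a‖ < 1 := mem_ball_zero_iff.1 (hf.2 haA)
    have hb : ‖b‖ < 1 := mem_ball_zero_iff.1 (hg.2 hbB)
    rw [mem_ball_zero_iff]
    calc ‖-a - b‖ ≤ ‖-a‖ + ‖b‖ := norm_sub_le _ _
    _ = ‖a‖ + ‖b‖ := by rw [norm_neg]
    _ < 2 := by linarith
  have hts : tsupport (𝓕 ⇑(mulS (negS f) (conjS g))) ⊆ K :=
    closure_minimal hsupp hKc.isClosed
  exact ⟨IsCompact.of_isClosed_subset hKc (isClosed_tsupport _) hts, hts.trans hKb⟩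

theorem main_bound (φ : 𝓢(E2, ℂ)) (ψ : E2 → ℂ)
    (hψ : MemLp ψ ⊤ volume)
    (hsymb : ∀ g : 𝓢(E2, ℂ), HasCompactSupport (𝓕 ⇑g) → tsupport (𝓕 ⇑g) ⊆ Metric.ball 0 2 →
      ∫ x, g x * ψ x = ∫ x, g x * φ x)
    (f g : 𝓢(E2, ℂ)) (hf : PWcond f) (hg : PWcond g) :
    ‖hankelForm φ f g‖ ≤
      (eLpNorm ψ ⊤ volume).toReal * (eLpNorm ⇑f 2 volume).toReal *
        (eLpNorm ⇑g 2 volume).toReal := by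
  set h : 𝓢(E2, ℂ) := mulS (negS f) (conjS g) with hh
  obtain ⟨hcs, hsub⟩ := h_support f g hf hg
  have hsymb' := hsymb h hcs hsub
  have hcoe : (⇑h : E2 → ℂ) = fun x => f (-x) * (starRingEnd ℂ) (g x) := rfl
  simp only [hcoe] at hsymb'
  have hrepr : hankelForm φ f g = ∫ x, f (-x) * (starRingEnd ℂ) (g x) * ψ x :=
    (key φ f g hf hg).trans hsymb'.symm
  have hmeas : AEStronglyMeasurable (fun x => f (-x) * (starRingEnd ℂ) (g x) * ψ x) volume :=
    (h.continuous.aestronglyMeasurable.mul hψ.1 :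
      AEStronglyMeasurable (fun x => h x * ψ x) volume)
  have hnorm1 : ‖∫ x, f (-x) * (starRingEnd ℂ) (g x) * ψ x‖ ≤
      (eLpNorm (fun x => f (-x) * (starRingEnd ℂ) (g x) * ψ x) 1 volume).toReal := by
    rw [eLpNorm_one_eq_lintegral_enorm, ← integral_norm_eq_lintegral_enorm hmeas]
    exact norm_integral_le_integral_norm _
  have hfneg2 : eLpNorm (fun x => f (-x)) 2 volume = eLpNorm ⇑f 2 volume :=
    eLpNorm_comp_measurePreserving f.continuous.aestronglyMeasurable
      (Measure.measurePreserving_neg volume)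
  have hconj2 : eLpNorm (fun x => (starRingEnd ℂ) (g x)) 2 volume = eLpNorm ⇑g 2 volume :=
    eLpNorm_congr_norm_ae (Filter.Eventually.of_forall fun x => RCLike.norm_conj _)
  have hh1 : eLpNorm ⇑h 1 volume ≤ eLpNorm ⇑f 2 volume * eLpNorm ⇑g 2 volume := by
    have := eLpNorm_le_eLpNorm_mul_eLpNorm_of_nnnorm
      (μ := (volume : Measure E2)) (p := 2) (q := 2) (r := 1)
      (f := fun x => f (-x)) (g := fun x => (starRingEnd ℂ) (g x))
      (negS f).continuous.aestronglyMeasurable (conjS g).continuous.aestronglyMeasurable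
      (fun a b => a * b) 1
      (Filter.Eventually.of_forall fun x => by rw [one_mul]; exact (nnnorm_mul _ _).le)
    rw [ENNReal.coe_one, one_mul, hfneg2, hconj2] at this
    exact this
  have hprod : eLpNorm (fun x => f (-x) * (starRingEnd ℂ) (g x) * ψ x) 1 volume ≤
      eLpNorm ⇑f 2 volume * eLpNorm ⇑g 2 volume * eLpNorm ψ ⊤ volume := by
    refine le_trans (eLpNorm_le_eLpNorm_mul_eLpNorm_top (μ := (volume : Measure E2)) 1
      (f := fun x => f (-x) * (starRingEnd ℂ) (g x))
      (h.continuous.aestronglyMeasurable :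
        AEStronglyMeasurable (fun x => f (-x) * (starRingEnd ℂ) (g x)) volume)
      ψ (fun a b => a * b) 1
      (Filter.Eventually.of_forall fun x => by rw [one_mul]; exact (nnnorm_mul _ _).le)
      |>.trans_eq (by rw [ENNReal.coe_one, one_mul])) ?_
    refine mul_le_mul_left (le_trans (le_of_eq ?_) hh1) _
    rfl
  have hfin : eLpNorm ⇑f 2 volume * eLpNorm ⇑g 2 volume * eLpNorm ψ ⊤ volume ≠ ⊤ :=
    ENNReal.mul_ne_top (ENNReal.mul_ne_top (schwartz_memLp2 f).2.ne (schwartz_memLp2 g).2.ne)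
      hψ.2.ne
  calc ‖hankelForm φ f g‖ = ‖∫ x, f (-x) * (starRingEnd ℂ) (g x) * ψ x‖ := by rw [hrepr]
    _ ≤ (eLpNorm (fun x => f (-x) * (starRingEnd ℂ) (g x) * ψ x) 1 volume).toReal := hnorm1
    _ ≤ (eLpNorm ⇑f 2 volume * eLpNorm ⇑g 2 volume * eLpNorm ψ ⊤ volume).toReal :=
        ENNReal.toReal_mono hfin hprod
    _ = (eLpNorm ψ ⊤ volume).toReal * (eLpNorm ⇑f 2 volume).toReal *
          (eLpNorm ⇑g 2 volume).toReal := by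
        rw [ENNReal.toReal_mul, ENNReal.toReal_mul]; ring

theorem hankelForm_le_of_symbol' (φ : 𝓢(E2, ℂ)) (ψ : E2 → ℂ)
    (hψ : MemLp ψ ⊤ volume)
    (hsymb : ∀ g : 𝓢(E2, ℂ), HasCompactSupport (𝓕 ⇑g) → tsupport (𝓕 ⇑g) ⊆ Metric.ball 0 2 →
      ∫ x, g x * ψ x = ∫ x, g x * φ x) :
    (∀ f g : 𝓢(E2, ℂ), PWcond f → PWcond g →
      ‖hankelForm φ f g‖ ≤
        (eLpNorm ψ ⊤ volume).toReal * (eLpNorm ⇑f 2 volume).toReal *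
          (eLpNorm ⇑g 2 volume).toReal) ∧
    hankelNorm φ ≤ (eLpNorm ψ ⊤ volume).toReal := by
  have part1 : ∀ f g : 𝓢(E2, ℂ), PWcond f → PWcond g →
      ‖hankelForm φ f g‖ ≤
        (eLpNorm ψ ⊤ volume).toReal * (eLpNorm ⇑f 2 volume).toReal *
          (eLpNorm ⇑g 2 volume).toReal :=
    fun f g hf hg => main_bound φ ψ hψ hsymb f g hf hg
  refine ⟨part1, ?_⟩
  refine Real.sSup_le ?_ ENNReal.toReal_nonneg
  rintro x ⟨f, g, hf, hg, hf1, hg1, rfl⟩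
  have hb := part1 f g hf hg
  have haf : (eLpNorm ⇑f 2 volume).toReal ≤ 1 := by
    simpa using ENNReal.toReal_mono ENNReal.one_ne_top hf1
  have hag : (eLpNorm ⇑g 2 volume).toReal ≤ 1 := by
    simpa using ENNReal.toReal_mono ENNReal.one_ne_top hg1
  calc ‖hankelForm φ f g‖
      ≤ (eLpNorm ψ ⊤ volume).toReal * (eLpNorm ⇑f 2 volume).toReal *
          (eLpNorm ⇑g 2 volume).toReal := hb
    _ ≤ (eLpNorm ψ ⊤ volume).toReal * 1 * 1 := by gcongr
    _ = (eLpNorm ψ ⊤ volume).toReal := by ring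

end HankelAux

theorem hankelForm_le_of_symbol (φ : 𝓢(E2, ℂ)) (ψ : E2 → ℂ)
    (hψ : MemLp ψ ⊤ volume)
    (hsymb : ∀ g : 𝓢(E2, ℂ), HasCompactSupport (𝓕 ⇑g) → tsupport (𝓕 ⇑g) ⊆ Metric.ball 0 2 →
      ∫ x, g x * ψ x = ∫ x, g x * φ x) :
    (∀ f g : 𝓢(E2, ℂ), PWcond f → PWcond g →
      ‖hankelForm φ f g‖ ≤
        (eLpNorm ψ ⊤ volume).toReal * (eLpNorm ⇑f 2 volume).toReal *
          (eLpNorm ⇑g 2 volume).toReal) ∧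
    hankelNorm φ ≤ (eLpNorm ψ ⊤ volume).toReal := by
  exact hankelForm_le_of_symbol' φ ψ hψ hsymb
end
end

section
/- Let n ≥ 2 be an integer, set r = min(1 − 1/√2, 1/n²), and for j = 1, …, n set θ_j = 2π(j−1)/n and e_j = (cos θ_j, sin θ_j) ∈ ℝ². Let S_j denote the closed ball of radius r centered at (2−r)e_j. Then for every pair 1 ≤ j ≠ k ≤ n, the sets E_j = {η ∈ 𝔻 : there exists ξ ∈ 𝔻 with ξ + η ∈ S_j} and E_k = {η ∈ 𝔻 : there exists ξ ∈ 𝔻 with ξ + η ∈ S_k} are disjoint. -/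
open Metric
open scoped Real

noncomputable section

private lemma inner_ee (a b : ℝ) :
    (inner ℝ ((WithLp.equiv 2 (Fin 2 → ℝ)).symm ![Real.cos a, Real.sin a])
      ((WithLp.equiv 2 (Fin 2 → ℝ)).symm ![Real.cos b, Real.sin b]) : ℝ) = Real.cos (a - b) := by
  simp [PiLp.inner_apply, Fin.sum_univ_two, Real.cos_sub, mul_comm]

private lemma cos_angle_le (n d : ℕ) (hn : 2 ≤ n) (hd1 : 1 ≤ d) (hdn : d ≤ n - 1) :
    Real.cos (2 * π * d / n) ≤ Real.cos (2 * π / n) := by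
  have hn0 : (0:ℝ) < n := by positivity
  have hπ := Real.pi_pos
  have hdn' : (d:ℝ) + 1 ≤ n := by exact_mod_cast (by omega : d + 1 ≤ n)
  have hd1' : (1:ℝ) ≤ d := by exact_mod_cast hd1
  rcases le_or_gt (2*d) n with h | h
  · have h' : (2*d : ℝ) ≤ n := by exact_mod_cast h
    apply Real.cos_le_cos_of_nonneg_of_le_pi (by positivity) ?_ ?_
    · rw [div_le_iff₀ hn0]; nlinarith
    · rw [div_le_div_iff₀ hn0 hn0]
      nlinarith [mul_nonneg (mul_nonneg (by linarith : (0:ℝ) ≤ 2*π) hn0.le) (by linarith : (0:ℝ) ≤ (d:ℝ) - 1)]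
  · have h' : (n:ℝ) < 2*d := by exact_mod_cast h
    have key : Real.cos (2 * π * d / n) = Real.cos (2 * π * ((n:ℝ) - d) / n) := by
      have e1 : 2 * π * ((n:ℝ) - d) / n = 2 * π - 2 * π * d / n := by
        field_simp
      rw [e1, Real.cos_sub, Real.cos_two_pi, Real.sin_two_pi]; ring
    rw [key]
    apply Real.cos_le_cos_of_nonneg_of_le_pi ?_ ?_ ?_
    · positivity
    · rw [div_le_iff₀ hn0]; nlinarith
    · rw [div_le_div_iff₀ hn0 hn0]
      nlinarith [mul_nonneg (mul_nonneg (by linarith : (0:ℝ) ≤ 2*π) hn0.le) (by linarith : (0:ℝ) ≤ ((n:ℝ) - d) - 1)]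

private lemma cos_pi_div_le (n : ℕ) (hn : 2 ≤ n) : Real.cos (π / n) ≤ 1 - 2 / (n:ℝ)^2 := by
  have hn0 : (0:ℝ) < n := by positivity
  have hn2 : (2:ℝ) ≤ n := by exact_mod_cast hn
  have hπ := Real.pi_pos
  have h := Real.cos_le_one_sub_mul_cos_sq (x := π / n) ?_
  · have e : 2 / π ^ 2 * (π / n) ^ 2 = 2 / (n:ℝ)^2 := by field_simp
    linarith [e ▸ h]
  · rw [abs_of_pos (by positivity), div_le_iff₀ hn0]; nlinarith

private lemma cos_theta_le' (n a b : ℕ) (hn : 2 ≤ n) (ha : a < n) (hba : b < a) :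
    Real.cos (2 * π * a / n - 2 * π * b / n) ≤ Real.cos (2 * π / n) := by
  have hd : (2 : ℝ) * π * a / n - 2 * π * b / n = 2 * π * ((a - b : ℕ) : ℝ) / n := by
    rw [Nat.cast_sub hba.le]; ring
  rw [hd]
  exact cos_angle_le n (a - b) hn (by omega) (by omega)

/-- key inner-product bound -/
private lemma inner_lower (r : ℝ) (hr0 : 0 < r) (hr4 : r ≤ 1/4) (u η ξ : E2) (hu : ‖u‖ = 1)
    (hη : ‖η‖ < 1) (hξ : ‖ξ‖ < 1) (h : ‖ξ + η - (2 - r) • u‖ ≤ r) :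
    1 - 2*r < inner ℝ η u := by
  have h1 : ‖η - (2 - r) • u‖ < 1 + r := by
    have h2 := norm_sub_le (ξ + η - (2 - r) • u) ξ
    have e : ξ + η - (2 - r) • u - ξ = η - (2 - r) • u := by abel
    rw [e] at h2
    linarith
  have hsq : ‖η - (2-r) • u‖^2 = ‖η‖^2 - 2*((2-r) * inner ℝ η u) + (2-r)^2 := by
    rw [norm_sub_sq_real, real_inner_smul_right, norm_smul, Real.norm_eq_abs,
      abs_of_pos (by linarith), hu]
    ring
  have hcs := real_inner_mul_inner_self_le η u
  rw [real_inner_self_eq_norm_mul_norm, real_inner_self_eq_norm_mul_norm, hu] at hcs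
  have h2 : ‖η - (2-r) • u‖^2 < (1+r)^2 := by
    have := norm_nonneg (η - (2-r) • u)
    nlinarith
  nlinarith [norm_nonneg η]

set_option maxHeartbeats 1000000 in
theorem Dsets_disjoint (n : ℕ) (hn : 2 ≤ n) (r : ℝ)
    (hr : r = min (1 - 1 / Real.sqrt 2) (1 / (n : ℝ) ^ 2))
    (θ : Fin n → ℝ) (hθ : ∀ j, θ j = 2 * π * (j : ℝ) / n)
    (e : Fin n → E2)
    (he : ∀ j, e j = (WithLp.equiv 2 (Fin 2 → ℝ)).symm ![Real.cos (θ j), Real.sin (θ j)])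
    (S : Fin n → Set E2) (hS : ∀ j, S j = Metric.closedBall ((2 - r) • e j) r)
    (Eset : Fin n → Set E2)
    (hE : ∀ j, Eset j = {η | η ∈ disc ∧ ∃ ξ ∈ disc, ξ + η ∈ S j}) :
    ∀ j k, j ≠ k → Disjoint (Eset j) (Eset k) := by
  have hn0 : (0:ℝ) < n := by positivity
  have hn2 : (2:ℝ) ≤ n := by exact_mod_cast hn
  have hs2 : (1:ℝ) < Real.sqrt 2 := by
    nlinarith [Real.sq_sqrt (by norm_num : (2:ℝ) ≥ 0), Real.sqrt_nonneg 2]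
  have hr0 : 0 < r := by
    rw [hr]
    apply lt_min
    · rw [sub_pos, div_lt_one (by linarith)]; exact hs2
    · positivity
  have hrn : r ≤ 1 / (n:ℝ)^2 := hr ▸ min_le_right _ _
  have hrq : r ≤ 1/4 := by
    have : 1 / (n:ℝ)^2 ≤ 1/4 := by
      rw [div_le_div_iff₀ (by positivity) (by norm_num)]
      nlinarith
    linarith
  -- norms of e j
  have hnorm : ∀ j, ‖e j‖ = 1 := by
    intro j
    have h1 : (inner ℝ (e j) (e j) : ℝ) = 1 := by
      rw [he j, inner_ee, sub_self, Real.cos_zero]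
    rw [real_inner_self_eq_norm_mul_norm] at h1
    nlinarith [norm_nonneg (e j)]
  have hinner : ∀ j k : Fin n, (inner ℝ (e j) (e k) : ℝ) = Real.cos (θ j - θ k) := by
    intro j k; rw [he j, he k, inner_ee]
  -- main
  intro j k hjk
  rw [Set.disjoint_left]
  rintro η hj hk
  rw [hE] at hj hk
  obtain ⟨hηd, ξ, hξd, hξj⟩ := hj
  obtain ⟨-, ζ, hζd, hζk⟩ := hk
  rw [disc, mem_ball_zero_iff] at hηd hξd hζd
  rw [hS, Metric.mem_closedBall, dist_eq_norm] at hξj hζk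
  have hAj : 1 - 2*r < inner ℝ η (e j) := inner_lower r hr0 hrq _ _ _ (hnorm j) hηd hξd hξj
  have hAk : 1 - 2*r < inner ℝ η (e k) := inner_lower r hr0 hrq _ _ _ (hnorm k) hηd hζd hζk
  -- cos bound
  have hcosδ : Real.cos (θ j - θ k) ≤ Real.cos (2 * π / n) := by
    have hvne : (j : ℕ) ≠ (k : ℕ) := fun h => hjk (Fin.ext h)
    rw [hθ j, hθ k]
    rcases lt_or_gt_of_ne hvne with h | h
    · rw [← Real.cos_neg]
      have e1 : -(2 * π * ((j:ℕ) : ℝ) / n - 2 * π * ((k:ℕ) : ℝ) / n)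
          = 2 * π * ((k:ℕ) : ℝ) / n - 2 * π * ((j:ℕ) : ℝ) / n := by ring
      rw [e1]
      exact cos_theta_le' n k j hn k.isLt h
    · exact cos_theta_le' n j k hn j.isLt h
  have hcosp0 : 0 ≤ Real.cos (π / n) := by
    have hge : (0:ℝ) ≤ π / n := by positivity
    apply Real.cos_nonneg_of_mem_Icc
    constructor
    · linarith [Real.pi_pos]
    · rw [div_le_div_iff₀ hn0 (by norm_num : (0:ℝ) < 2)]
      nlinarith [Real.pi_pos]
  have hcosp : Real.cos (π / n) ≤ 1 - 2 / (n:ℝ)^2 := cos_pi_div_le n hn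
  have hdouble : Real.cos (2 * π / n) = 2 * Real.cos (π / n) ^ 2 - 1 := by
    have : 2 * π / n = 2 * (π / n) := by ring
    rw [this, Real.cos_two_mul]
  -- combine
  have hsum : (inner ℝ η (e j + e k) : ℝ) = inner ℝ η (e j) + inner ℝ η (e k) :=
    inner_add_right η (e j) (e k)
  have hcs := real_inner_mul_inner_self_le η (e j + e k)
  rw [real_inner_self_eq_norm_mul_norm, real_inner_self_eq_norm_mul_norm] at hcs
  have hnadd : ‖e j + e k‖ * ‖e j + e k‖ = 2 + 2 * Real.cos (θ j - θ k) := by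
    have := norm_add_sq_real (e j) (e k)
    rw [hnorm j, hnorm k, hinner j k] at this
    nlinarith
  rw [hnadd, hsum] at hcs
  have hη1 : ‖η‖ * ‖η‖ ≤ 1 := by nlinarith [norm_nonneg η]
  have h2rn : 2 * r ≤ 2 / (n:ℝ)^2 := by
    rw [div_eq_mul_inv, ← one_div]
    linarith
  have hpos : 0 < 1 - 2 / (n:ℝ)^2 := by
    have : 2 / (n:ℝ)^2 ≤ 1/2 := by
      rw [div_le_div_iff₀ (by positivity) (by norm_num)]
      nlinarith
    linarith
  set c : ℝ := inner ℝ η (e j) + inner ℝ η (e k) with hcdef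
  have hc : 2*(1-2*r) < c := by simp only [hcdef]; linarith
  have hcsq : 4*(1-2*r)^2 < c*c := by nlinarith
  have hc2 : 0 ≤ 2 + 2 * Real.cos (θ j - θ k) := by nlinarith [Real.neg_one_le_cos (θ j - θ k)]
  have h4 : c*c ≤ 2 + 2 * Real.cos (θ j - θ k) := by nlinarith
  have h5 : 2 + 2 * Real.cos (θ j - θ k) ≤ 4 * Real.cos (π / n)^2 := by
    rw [hdouble] at hcosδ
    linarith
  have h6 : 4 * Real.cos (π / n)^2 ≤ 4*(1 - 2/(n:ℝ)^2)^2 := by nlinarith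
  have h7 : 4*(1 - 2/(n:ℝ)^2)^2 ≤ 4*(1-2*r)^2 := by nlinarith
  linarith
end
end

section
/- Let w, ξ ∈ ℂ with √2 ≤ |w|, |ξ| < 1, and |w − ξ| < 1. Then ξ ≠ 0 and |arg(ξ · conj(w))| ≤ arccos(|w|/2), where arg denotes the principal argument. -/
open scoped Real

theorem sector_containment (w ξ : ℂ) (hw : Real.sqrt 2 ≤ ‖w‖)
    (hξ : ‖ξ‖ < 1) (hwξ : ‖w - ξ‖ < 1) :
    ξ ≠ 0 ∧ |Complex.arg (ξ * (starRingEnd ℂ) w)| ≤ Real.arccos (‖w‖ / 2) := by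
  have hs2 : (1 : ℝ) < Real.sqrt 2 := by
    nlinarith [Real.sq_sqrt (by norm_num : (0:ℝ) ≤ 2), Real.sqrt_nonneg 2]
  have ha2 : (2 : ℝ) ≤ ‖w‖ ^ 2 := by
    nlinarith [Real.sq_sqrt (by norm_num : (0:ℝ) ≤ 2), Real.sqrt_nonneg 2]
  have hξ0 : ξ ≠ 0 := by
    intro h
    rw [h, sub_zero] at hwξ
    linarith
  have hw0 : w ≠ 0 := by
    intro h
    rw [h] at hw
    simp at hw
    linarith
  refine ⟨hξ0, ?_⟩
  set a := ‖w‖ with haa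
  set b := ‖ξ‖ with hbb
  have ha : 0 < a := norm_pos_iff.mpr hw0
  have hb : 0 < b := norm_pos_iff.mpr hξ0
  set z := ξ * (starRingEnd ℂ) w with hz
  have hz0 : z ≠ 0 := mul_ne_zero hξ0 (by simpa using hw0)
  have habs : ‖z‖ = b * a := by
    rw [hz, norm_mul, Complex.norm_conj]
  -- key inequality on real part
  have hnorm : Complex.normSq (w - ξ) = Complex.normSq w + Complex.normSq ξ - 2 * z.re := by
    rw [Complex.normSq_sub]
    have : (w * (starRingEnd ℂ) ξ).re = z.re := by
      rw [hz, ← Complex.conj_conj w, ← map_mul, Complex.conj_re, Complex.conj_conj]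
      ring_nf
    rw [this]
  have hnlt : Complex.normSq (w - ξ) < 1 := by
    rw [← Complex.sq_norm]
    nlinarith [norm_nonneg (w - ξ)]
  have hre : b * a ^ 2 ≤ 2 * z.re := by
    have h1 : Complex.normSq w = a ^ 2 := by rw [← Complex.sq_norm]
    have h2 : Complex.normSq ξ = b ^ 2 := by rw [← Complex.sq_norm]
    rw [hnorm, h1, h2] at hnlt
    nlinarith
  -- cos (arg z) ≥ a / 2
  have hcos : a / 2 ≤ Real.cos |z.arg| := by
    rw [Real.cos_abs, Complex.cos_arg hz0, habs]
    rw [div_le_div_iff₀ (by norm_num) (by positivity)]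
    nlinarith
  have harg : |z.arg| = Real.arccos (Real.cos |z.arg|) :=
    (Real.arccos_cos (abs_nonneg _) (Complex.abs_arg_le_pi z)).symm
  rw [harg]
  -- arccos is antitone
  unfold Real.arccos
  have := Real.monotone_arcsin hcos
  linarith
end

section
/- For every real r with 0 ≤ r ≤ 1/2, one has arccos(1−r) + arcsin(r/(2−r)) ≤ 2√r + r ≤ 3√r. -/
open scoped Real

theorem arccos_add_arcsin_bound (r : ℝ) (hr0 : 0 ≤ r) (hr : r ≤ 1 / 2) :
    Real.arccos (1 - r) + Real.arcsin (r / (2 - r)) ≤ 2 * Real.sqrt r + r ∧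
      2 * Real.sqrt r + r ≤ 3 * Real.sqrt r := by
  have hs0 : 0 ≤ Real.sqrt r := Real.sqrt_nonneg r
  have hrle1 : r ≤ 1 := by linarith
  have hsle : Real.sqrt r ≤ 1 := by
    rw [show (1:ℝ) = Real.sqrt 1 by simp]
    exact Real.sqrt_le_sqrt hrle1
  have hsq : Real.sqrt r ^ 2 = r := Real.sq_sqrt hr0
  have hrs : r ≤ Real.sqrt r := by
    nlinarith [hsq]
  constructor
  · rcases eq_or_lt_of_le hr0 with h0 | h0
    · simp [← h0]
    -- arccos (1 - r) ≤ 2 √r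
    have hs0' : 0 < Real.sqrt r := Real.sqrt_pos.mpr h0
    have hsin : Real.sqrt r - (Real.sqrt r) ^ 3 / 4 < Real.sin (Real.sqrt r) :=
      by have := Real.sin_gt_sub_cube hs0'; linarith [pow_pos hs0' 3]
    have hcos : Real.cos (2 * Real.sqrt r) ≤ 1 - r := by
      have h2 : Real.cos (2 * Real.sqrt r) = 1 - 2 * Real.sin (Real.sqrt r) ^ 2 := by
        have hid := Real.sin_sq_add_cos_sq (Real.sqrt r)
        rw [Real.cos_two_mul]; linarith
      rw [h2]
      have hsinpos : 0 ≤ Real.sqrt r - (Real.sqrt r) ^ 3 / 4 := by nlinarith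
      have hsin2 : (Real.sqrt r - Real.sqrt r ^ 3 / 4) ^ 2 ≤ Real.sin (Real.sqrt r) ^ 2 :=
        pow_le_pow_left₀ hsinpos hsin.le 2
      have key : (Real.sqrt r - Real.sqrt r ^ 3 / 4) ^ 2 = r * (1 - r / 4) ^ 2 := by
        linear_combination (1 - (Real.sqrt r ^ 2 + r) / 2 +
          (Real.sqrt r ^ 4 + Real.sqrt r ^ 2 * r + r ^ 2) / 16) * hsq
      rw [key] at hsin2
      have hkey2 : r ≤ 2 * (r * (1 - r / 4) ^ 2) := by
        nlinarith [mul_nonneg hr0 hr0, mul_nonneg (mul_nonneg hr0 hr0) hr0]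
      linarith
    have harccos : Real.arccos (1 - r) ≤ 2 * Real.sqrt r := by
      have h2s : 2 * Real.sqrt r ≤ π := by
        nlinarith [Real.pi_gt_three]
      calc Real.arccos (1 - r) ≤ Real.arccos (Real.cos (2 * Real.sqrt r)) := by
            unfold Real.arccos
            have := Real.monotone_arcsin hcos
            linarith
        _ = 2 * Real.sqrt r := Real.arccos_cos (by positivity) h2s
    -- arcsin (r/(2-r)) ≤ r
    have harcsin : Real.arcsin (r / (2 - r)) ≤ r := by
      have hrle1' : r ≤ 1 := hrle1
      have hsinr : r - r ^ 3 / 4 < Real.sin r := by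
        have := Real.sin_gt_sub_cube h0; linarith [pow_pos h0 3]
      have hle : r / (2 - r) ≤ Real.sin r := by
        rw [div_le_iff₀ (by linarith)]
        nlinarith [hsinr, mul_nonneg (mul_nonneg hr0 hr0) hr0, sq_nonneg r, mul_nonneg hr0 hr0]
      calc Real.arcsin (r / (2 - r)) ≤ Real.arcsin (Real.sin r) := Real.monotone_arcsin hle
        _ = r := Real.arcsin_sin (by linarith [Real.pi_gt_three]) (by linarith [Real.pi_gt_three])
    linarith
  · linarith
end

section
/- Let 0 < r ≤ 1 − 1/√2 and θ ∈ ℝ. Suppose w ∈ ℂ satisfies |w − (2−r)e^{iθ}| ≤ r, and ξ ∈ ℂ satisfies |ξ| < 1 and |w − ξ| < 1. Then ξ ≠ 0 and |arg(ξ · e^{−iθ})| ≤ 3√r, where arg denotes the principal argument. -/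
open scoped Real

private lemma sector_aux1 (r ρ x y p q : ℝ) (hr0 : 0 < r) (hr' : r ≤ 0.294)
    (h1r : (1:ℝ)/2 ≤ (1 - r)^2) (hρpos : 0 < ρ) (hρ1 : ρ < 1)
    (hρsq : ρ^2 = x^2 + y^2) (hp1 : 2 - 2*r ≤ p) (hp2 : p ≤ 2) (hq : |q| ≤ r)
    (hmain : ρ^2 + p^2 + q^2 - 1 < 2*(x*p + y*q)) :
    ρ * (1 - 5*r/2 + r^2) < x := by
  have hqr : 0 ≤ r := le_of_lt hr0
  have hyρ : |y| ≤ ρ := by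
    have h1 : y^2 ≤ ρ^2 := by nlinarith [sq_nonneg x]
    have h2 := abs_nonneg y
    nlinarith [abs_mul_abs_self y]
  have hyq : y * q ≤ ρ * r := by
    calc y * q ≤ |y * q| := le_abs_self _
      _ = |y| * |q| := abs_mul y q
      _ ≤ ρ * r := mul_le_mul hyρ hq (abs_nonneg q) (le_of_lt hρpos)
  have hppos : 0 < p := by linarith
  have hpsq : 4*(1-r)^2 ≤ p^2 := by nlinarith
  have h4x : ρ^2 + p^2 - 1 - 2*(ρ*r) < 2*(x*p) := by
    nlinarith [sq_nonneg q]
  have hxpos : 0 < x := by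
    by_contra h
    push_neg at h
    have hxp : x * p ≤ 0 := mul_nonpos_of_nonpos_of_nonneg h (le_of_lt hppos)
    nlinarith [sq_nonneg (ρ - 1)]
  have key : 0 ≤ (1 - ρ) * (4*(1-r)^2 - 1 - ρ) := by
    apply mul_nonneg <;> nlinarith
  have h2x : (2 - p) * x ≥ 0 := mul_nonneg (by linarith) (le_of_lt hxpos)
  linarith [key, h4x, hpsq, h2x]

private lemma sector_aux2 (r s : ℝ) (hr0 : 0 < r) (hr' : r ≤ 0.294)
    (hspos : 0 < s) (hssq : s^2 = r) (hs23 : s ≤ 2/3) :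
    Real.cos (3*s) ≤ 1 - 5*r/2 + r^2 := by
  have hsin : 3*s/2 - (3*s/2)^3/4 < Real.sin (3*s/2) :=
    by have := Real.sin_gt_sub_cube (x := 3*s/2) (by linarith); nlinarith [pow_pos (show 0 < 3*s/2 by linarith) 3]
  have hsinpos : 0 < 3*s/2 - (3*s/2)^3/4 := by nlinarith
  have hcos2 : Real.cos (3*s) = 1 - 2 * Real.sin (3*s/2)^2 := by
    have h := Real.cos_two_mul (3*s/2)
    rw [show 2*(3*s/2) = 3*s by ring] at h
    linarith [Real.sin_sq_add_cos_sq (3*s/2)]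
  have hS2 : (3*s/2 - (3*s/2)^3/4)^2 < Real.sin (3*s/2)^2 := by
    nlinarith [hsin, hsinpos]
  have h4 : s^4 = r^2 := by rw [show s^4 = (s^2)^2 by ring, hssq]
  have h6 : s^6 = r^3 := by rw [show s^6 = (s^2)^3 by ring, hssq]
  rw [hcos2]
  nlinarith [hS2, hssq, h4, h6,
    mul_nonneg (mul_nonneg (le_of_lt hr0) (le_of_lt hr0)) (le_of_lt hr0),
    mul_nonneg (le_of_lt hr0) (by linarith : (0:ℝ) ≤ 0.294 - r)]

theorem sector_of_small_disc (r θ : ℝ) (hr0 : 0 < r) (hr : r ≤ 1 - 1 / Real.sqrt 2)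
    (w ξ : ℂ) (hw : ‖w - (2 - r) * Complex.exp (θ * Complex.I)‖ ≤ r)
    (hξ : ‖ξ‖ < 1) (hwξ : ‖w - ξ‖ < 1) :
    ξ ≠ 0 ∧ |Complex.arg (ξ * Complex.exp (-θ * Complex.I))| ≤ 3 * Real.sqrt r := by
  -- numeric facts about r
  have hs2 : Real.sqrt 2 ^ 2 = 2 := Real.sq_sqrt (by norm_num)
  have hs2pos : (0:ℝ) < Real.sqrt 2 := Real.sqrt_pos.mpr (by norm_num)
  have hs2lt : Real.sqrt 2 < 1.415 := by nlinarith
  have hr' : r ≤ 0.294 := by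
    have : 1 / 1.415 < 1 / Real.sqrt 2 := by
      apply one_div_lt_one_div_of_lt hs2pos hs2lt
    nlinarith
  have h1r : (1:ℝ)/2 ≤ (1 - r)^2 := by
    have h1 : 1 / Real.sqrt 2 ≤ 1 - r := by linarith
    have h2 : (0:ℝ) < 1 / Real.sqrt 2 := by positivity
    have := mul_self_le_mul_self (le_of_lt h2) h1
    have h3 : (1 / Real.sqrt 2) * (1 / Real.sqrt 2) = 1/2 := by
      rw [div_mul_div_comm, one_mul]
      rw [show Real.sqrt 2 * Real.sqrt 2 = 2 by nlinarith]
    nlinarith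
  set e : ℂ := Complex.exp (θ * Complex.I) with he
  set e' : ℂ := Complex.exp (-θ * Complex.I) with he'
  have habe : ‖e‖ = 1 := Complex.norm_exp_ofReal_mul_I θ
  have habe' : ‖e'‖ = 1 := by
    have : (-θ : ℂ) = ((-θ : ℝ) : ℂ) := by push_cast; ring
    rw [he', this]
    exact Complex.norm_exp_ofReal_mul_I (-θ)
  have hee' : e * e' = 1 := by
    rw [he, he', ← Complex.exp_add]
    ring_nf
    exact Complex.exp_zero
  -- abs of the center
  have habc : ‖(2 - (r:ℂ)) * e‖ = 2 - r := by
    rw [norm_mul, habe, mul_one]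
    have : (2 - (r:ℂ)) = ((2 - r : ℝ) : ℂ) := by push_cast; ring
    rw [this, Complex.norm_real, Real.norm_eq_abs, abs_of_pos (by linarith)]
  -- |w| ≥ 2 - 2r
  have hwlb : 2 - 2*r ≤ ‖w‖ := by
    have h1 : ‖(2 - (r:ℂ)) * e‖ ≤
        ‖(2 - (r:ℂ)) * e - w‖ + ‖w‖ := by
      simpa using norm_add_le ((2 - (r:ℂ)) * e - w) w
    have h2 : ‖(2 - (r:ℂ)) * e - w‖ = ‖w - (2 - (r:ℂ)) * e‖ :=
      norm_sub_rev _ _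
    rw [habc, h2] at h1
    linarith [hw]
  -- |ξ| > 1 - 2r > 0
  have hξlb : 1 - 2*r < ‖ξ‖ := by
    have h1 : ‖w‖ ≤ ‖w - ξ‖ + ‖ξ‖ := by
      simpa using norm_add_le (w - ξ) ξ
    linarith
  have hξ0 : ξ ≠ 0 := by
    intro h
    rw [h, norm_zero] at hξlb
    linarith
  refine ⟨hξ0, ?_⟩
  -- rotated points
  set ζ : ℂ := ξ * e' with hζ
  set u : ℂ := w * e' with hu
  have hζ0 : ζ ≠ 0 := mul_ne_zero hξ0 (Complex.exp_ne_zero _)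
  have habζ : ‖ζ‖ = ‖ξ‖ := by rw [hζ, norm_mul, habe', mul_one]
  have habuζ : ‖u - ζ‖ = ‖w - ξ‖ := by
    rw [hu, hζ, ← sub_mul, norm_mul, habe', mul_one]
  have habuc : ‖u - (2 - (r:ℂ))‖ ≤ r := by
    have h1 : u - (2 - (r:ℂ)) = (w - (2 - (r:ℂ)) * e) * e' := by
      rw [sub_mul, mul_assoc, hee', mul_one, hu]
    rw [h1, norm_mul, habe', mul_one]
    exact hw
  set x := ζ.re
  set y := ζ.im
  set p := u.re
  set q := u.im
  set ρ := ‖ζ‖ with hρ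
  have hρpos : 0 < ρ := by
    rw [habζ]; linarith
  have hρ1 : ρ < 1 := by rw [habζ]; exact hξ
  have hρsq : ρ^2 = x^2 + y^2 := by
    rw [hρ, Complex.sq_norm, Complex.normSq_apply]; ring
  -- re/im bounds for u
  have hre : |p - (2 - r)| ≤ r := by
    have h1 := Complex.abs_re_le_norm (u - (2 - (r:ℂ)))
    have h2 : (u - (2 - (r:ℂ))).re = p - (2 - r) := by simp [Complex.sub_re]; rfl
    rw [h2] at h1
    linarith
  have hqabs : |q| ≤ r := by
    have h1 := Complex.abs_im_le_norm (u - (2 - (r:ℂ)))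
    have h2 : (u - (2 - (r:ℂ))).im = q := by simp [Complex.sub_im]; rfl
    rw [h2] at h1
    linarith
  have hp1 : 2 - 2*r ≤ p := by
    have := abs_le.mp hre
    linarith [this.1]
  have hp2 : p ≤ 2 := by
    have := abs_le.mp hre
    linarith [this.2]
  -- main quadratic inequality
  have hmain : ρ^2 + p^2 + q^2 - 1 < 2*(x*p + y*q) := by
    have h1 : ‖u - ζ‖^2 < 1 := by
      rw [habuζ]
      nlinarith [norm_nonneg (w - ξ)]
    rw [Complex.sq_norm, Complex.normSq_apply] at h1
    have h2 : (u - ζ).re = p - x := by simp [Complex.sub_re]; rfl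
    have h3 : (u - ζ).im = q - y := by simp [Complex.sub_im]; rfl
    rw [h2, h3] at h1
    linarith [hρsq, sq_nonneg (p-x), sq_nonneg (q-y),
      show (p-x)*(p-x)+(q-y)*(q-y) = p^2-2*(x*p)+x^2+q^2-2*(y*q)+y^2 by ring]
  have hcosarg : Real.cos (Complex.arg ζ) = x / ρ := Complex.cos_arg hζ0
  clear_value x y p q ρ ζ u
  have hxρ : ρ * (1 - 5*r/2 + r^2) < x :=
    sector_aux1 r ρ x y p q hr0 hr' h1r hρpos hρ1 hρsq hp1 hp2 hqabs hmain
  have hcoslb : 1 - 5*r/2 + r^2 < Real.cos (Complex.arg ζ) := by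
    rw [hcosarg, lt_div_iff₀ hρpos]
    linarith [hxρ]
  -- cos (3√r) ≤ 1 - 5r/2 + r²
  set s := Real.sqrt r with hs
  clear_value s
  have hspos : 0 < s := by rw [hs]; exact Real.sqrt_pos.mpr hr0
  have hssq : s^2 = r := by rw [hs]; exact Real.sq_sqrt (le_of_lt hr0)
  have hs23 : s ≤ 2/3 := by
    rw [hs]
    calc Real.sqrt r ≤ Real.sqrt ((2/3)^2) := Real.sqrt_le_sqrt (by norm_num; linarith)
      _ = 2/3 := Real.sqrt_sq (by norm_num)
  have hcos3 : Real.cos (3*s) ≤ 1 - 5*r/2 + r^2 :=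
    sector_aux2 r s hr0 hr' hspos hssq hs23
  -- 3√r ≤ π
  have hpi : 3*s ≤ π := by
    linarith [Real.pi_gt_three, hs23]
  -- conclude
  by_contra hcon
  push_neg at hcon
  have h1 : Real.cos |Complex.arg ζ| < Real.cos (3*s) :=
    Real.cos_lt_cos_of_nonneg_of_le_pi (by positivity) (Complex.abs_arg_le_pi ζ) hcon
  rw [Real.cos_abs] at h1
  linarith
end
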